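/- In the problem (P̄^P_K): inf α over (α,β,γ,s) ∈ ℝ₊ × ℝ₊ × ℝ₊ × K subject to −α + β + γ + ⟨e,s⟩ = 0 and (α/(1+⟨e,e⟩))(b − Ae) − γb + As = (1/(1+⟨e,e⟩))(b − Ae): for any feasible solution with α < 1, the point (1+⟨e,e⟩)/(γ(1+⟨e,e⟩) + 1 − α) · ( s + ((1−α)/(1+⟨e,e⟩)) e ) is a strictly feasible solution of the system Ax = b, x ∈ int K. -/

import Mathlib

open scoped RealInnerProductSpace Pointwise

/-- In the problem `(P̄^P_K)` with variables
`(α,β,γ,s) ∈ ℝ₊ × ℝ₊ × ℝ₊ × K` and constraints `−α + β + γ + ⟨e,s⟩ = 0` and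
`(α/(1+⟨e,e⟩))(b − Ae) − γb + As = (1/(1+⟨e,e⟩))(b − Ae)`: any feasible solution with
`α < 1` yields the strictly feasible point
`((1+⟨e,e⟩)/(γ(1+⟨e,e⟩)+1−α)) • (s + ((1−α)/(1+⟨e,e⟩)) e)` of the system
`Ax = b`, `x ∈ int K`. -/
theorem stmt18 {E : Type*} [NormedAddCommGroup E] [InnerProductSpace ℝ E]
    [FiniteDimensional ℝ E] {m : ℕ} (K : Set E) (e : E)
    (hKclosed : IsClosed K) (hKconv : Convex ℝ K)
    (hKcone : ∀ z ∈ K, ∀ t : ℝ, 0 ≤ t → t • z ∈ K)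
    (he : e ∈ interior K)
    (A : E →ₗ[ℝ] EuclideanSpace ℝ (Fin m)) (b : EuclideanSpace ℝ (Fin m))
    (α β γ : ℝ) (s : E)
    (hα : 0 ≤ α) (hβ : 0 ≤ β) (hγ : 0 ≤ γ) (hs : s ∈ K)
    (hc1 : -α + β + γ + ⟪e, s⟫ = 0)
    (hc2 : (α / (1 + ⟪e, e⟫)) • (b - A e) - γ • b + A s = (1 + ⟪e, e⟫)⁻¹ • (b - A e))
    (hα1 : α < 1) :
    A (((1 + ⟪e, e⟫) / (γ * (1 + ⟪e, e⟫) + 1 - α)) •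
        (s + ((1 - α) / (1 + ⟪e, e⟫)) • e)) = b ∧
      ((1 + ⟪e, e⟫) / (γ * (1 + ⟪e, e⟫) + 1 - α)) •
        (s + ((1 - α) / (1 + ⟪e, e⟫)) • e) ∈ interior K := by
  have hc : (0:ℝ) < 1 + ⟪e, e⟫ := by
    have := real_inner_self_nonneg (x := e); linarith
  set c : ℝ := 1 + ⟪e, e⟫ with hcdef
  have hd : (0:ℝ) < γ * c + 1 - α := by nlinarith
  set r : ℝ := (1 - α) / c with hrdef
  have hr : 0 < r := div_pos (by linarith) hc
  set t : ℝ := c / (γ * c + 1 - α) with htdef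
  have ht : 0 < t := div_pos hc hd
  -- positive scaling preserves interior
  have hmem : ∀ u : ℝ, 0 < u → ∀ x ∈ interior K, u • x ∈ interior K := by
    intro u hu x hx
    have h1 : u • x ∈ u • interior K := Set.smul_mem_smul_set hx
    rw [← interior_smul₀ hu.ne'] at h1
    refine interior_mono ?_ h1
    rintro y ⟨z, hz, rfl⟩
    exact hKcone z hz u hu.le
  have hre : r • e ∈ interior K := hmem r hr e he
  -- K is closed under addition
  have hadd : ∀ x ∈ K, ∀ y ∈ K, x + y ∈ K := by
    intro x hx y hy
    have h1 : (1/2 : ℝ) • x + (1/2 : ℝ) • y ∈ K :=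
      hKconv hx hy (by norm_num) (by norm_num) (by norm_num)
    have h2 := hKcone _ h1 2 (by norm_num)
    have h3 : (2:ℝ) • ((1/2 : ℝ) • x + (1/2 : ℝ) • y) = x + y := by
      rw [smul_add, smul_smul, smul_smul]; norm_num
    rwa [h3] at h2
  have hint : s + r • e ∈ interior K := by
    have hopen : IsOpen ((fun y => s + y) '' interior K) :=
      (Homeomorph.addLeft s).isOpenMap _ isOpen_interior
    have hsubK : (fun y => s + y) '' interior K ⊆ K := by
      rintro _ ⟨y, hy, rfl⟩
      exact hadd s hs y (interior_subset hy)
    exact interior_maximal hsubK hopen ⟨r • e, hre, rfl⟩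
  have hAs : A s = r • (b - A e) + γ • b := by
    have h : r = c⁻¹ - α / c := by rw [hrdef, sub_div]; ring
    rw [h]
    linear_combination (norm := module) hc2
  constructor
  · rw [map_smul, map_add, map_smul, hAs]
    have hscal : t * r + t * γ = 1 := by
      rw [htdef, hrdef]
      have hd' : γ * c + 1 - α ≠ 0 := hd.ne'
      have hc' : c ≠ 0 := hc.ne'
      have hcr : c * ((1 - α) / c) = 1 - α := by field_simp
      rw [← mul_add, div_mul_eq_mul_div, div_eq_one_iff_eq hd', mul_add, hcr]
      ring
    calc t • (r • (b - A e) + γ • b + r • A e) = (t * r + t * γ) • b := by module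
      _ = b := by rw [hscal, one_smul]
  · exact hmem t ht _ hint
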